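/- Let W ∈ ℝ^{n×n} be a mixing matrix with mixing rate α ≤ 1, let η ∈ ℝ, and let u, v ∈ ℝ^{nd} with block averages ū, v̄. Then ‖(W ⊗ I_d)(u − η·v) − u‖₂² ≤ 8·‖u − 1_n ⊗ ū‖₂² + 2·α²·η²·‖v − 1_n ⊗ v̄‖₂² + η²·n·‖v̄‖₂². -/

import Mathlib

open Finset

noncomputable section

/-- `ℝ^d` as a Euclidean space. -/
abbrev Vec (d : ℕ) := EuclideanSpace ℝ (Fin d)

/-- `ℝ^{nd}` as a stack of `n` blocks in `ℝ^d`, with the Euclidean (ℓ₂) norm. -/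
abbrev Stacked (n d : ℕ) := PiLp 2 (fun _ : Fin n => Vec d)

/-- Block average `x̄ = (1/n) Σᵢ xᵢ` of a stacked vector. -/
def blockAvg {n d : ℕ} (x : Stacked n d) : Vec d := (n : ℝ)⁻¹ • ∑ i, x i

/-- The stacked vector `1ₙ ⊗ y` whose every block equals `y`. -/
def stack (n : ℕ) {d : ℕ} (y : Vec d) : Stacked n d := WithLp.toLp 2 (fun _ => y)

/-- Action of `W ⊗ I_d` on a stacked vector. -/
def kronApply {n d : ℕ} (W : Matrix (Fin n) (Fin n) ℝ) (x : Stacked n d) : Stacked n d :=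
  WithLp.toLp 2 (fun i => ∑ j, W i j • x j)

/-- A mixing matrix: `W·1ₙ = 1ₙ` and `Wᵀ·1ₙ = 1ₙ`. -/
def IsMixing {n : ℕ} (W : Matrix (Fin n) (Fin n) ℝ) : Prop :=
  W.mulVec (fun _ => 1) = (fun _ => 1) ∧ Matrix.vecMul (fun _ => 1) W = (fun _ => 1)

/-- The mixing rate `α = ‖W − (1/n)1ₙ1ₙᵀ‖_op` (ℓ₂ operator norm). -/
def mixingRate {n : ℕ} (W : Matrix (Fin n) (Fin n) ℝ) : ℝ :=
  ‖LinearMap.toContinuousLinearMap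
    (Matrix.toEuclideanLin (W - (n : ℝ)⁻¹ • Matrix.of fun _ _ => (1 : ℝ)))‖

/- ### Auxiliary lemmas -/

lemma stacked_norm_sq {n d : ℕ} (x : Stacked n d) :
    ‖x‖ ^ 2 = ∑ i, ∑ k, (x i k) ^ 2 := by
  rw [PiLp.norm_sq_eq_of_L2]
  refine Finset.sum_congr rfl fun i _ => ?_
  rw [PiLp.norm_sq_eq_of_L2]
  exact Finset.sum_congr rfl fun k _ => by rw [Real.norm_eq_abs, sq_abs]

lemma sum_apply_piLp {n d : ℕ} (f : Fin n → Vec d) (k : Fin d) :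
    (∑ j, f j) k = ∑ j, f j k := by
  induction (Finset.univ : Finset (Fin n)) using Finset.induction with
  | empty => simp
  | insert a s h ih => rw [Finset.sum_insert h, Finset.sum_insert h, ← ih]; rfl

lemma kronApply_norm_le {n d : ℕ} (M : Matrix (Fin n) (Fin n) ℝ) (x : Stacked n d) :
    ‖kronApply M x‖ ≤
      ‖LinearMap.toContinuousLinearMap (Matrix.toEuclideanLin M)‖ * ‖x‖ := by
  set C := ‖LinearMap.toContinuousLinearMap (Matrix.toEuclideanLin M)‖ with hC
  have hC0 : 0 ≤ C := norm_nonneg _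
  have h2 : ‖kronApply M x‖ ^ 2 ≤ (C * ‖x‖) ^ 2 := by
    have key : ∀ k : Fin d, ∑ i, ((kronApply M x) i k) ^ 2 ≤ C ^ 2 * ∑ j, (x j k) ^ 2 := by
      intro k
      set y : EuclideanSpace ℝ (Fin n) := (WithLp.equiv 2 _).symm (fun j => x j k) with hy
      have h1 : ∑ i, ((kronApply M x) i k) ^ 2 = ‖Matrix.toEuclideanLin M y‖ ^ 2 := by
        rw [PiLp.norm_sq_eq_of_L2]
        refine Finset.sum_congr rfl fun i _ => ?_
        rw [Real.norm_eq_abs, sq_abs]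
        congr 1
        show (∑ j, M i j • x j) k = _
        rw [sum_apply_piLp]
        simp [Matrix.toEuclideanLin_apply, Matrix.mulVec, dotProduct, hy,
          smul_eq_mul]
      have h2 : ‖Matrix.toEuclideanLin M y‖ ≤ C * ‖y‖ := by
        rw [hC]
        exact (LinearMap.toContinuousLinearMap (Matrix.toEuclideanLin M)).le_opNorm y
      have h3 : ‖y‖ ^ 2 = ∑ j, (x j k) ^ 2 := by
        rw [PiLp.norm_sq_eq_of_L2]
        exact Finset.sum_congr rfl fun j _ => by rw [Real.norm_eq_abs, sq_abs]; rfl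
      calc ∑ i, ((kronApply M x) i k) ^ 2 = ‖Matrix.toEuclideanLin M y‖ ^ 2 := h1
        _ ≤ (C * ‖y‖) ^ 2 := by
            apply pow_le_pow_left₀ (norm_nonneg _) h2
        _ = C ^ 2 * ∑ j, (x j k) ^ 2 := by rw [mul_pow, h3]
    calc ‖kronApply M x‖ ^ 2 = ∑ i, ∑ k, ((kronApply M x) i k) ^ 2 := stacked_norm_sq _
      _ = ∑ k, ∑ i, ((kronApply M x) i k) ^ 2 := Finset.sum_comm
      _ ≤ ∑ k, C ^ 2 * ∑ j, (x j k) ^ 2 := Finset.sum_le_sum fun k _ => key k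
      _ = C ^ 2 * ∑ j, ∑ k, (x j k) ^ 2 := by rw [← Finset.mul_sum]; rw [Finset.sum_comm]
      _ = (C * ‖x‖) ^ 2 := by rw [← stacked_norm_sq, mul_pow]
  exact le_of_pow_le_pow_left₀ two_ne_zero (by positivity) h2

lemma kronApply_matrix_add {n d : ℕ} (M N : Matrix (Fin n) (Fin n) ℝ) (x : Stacked n d) :
    kronApply (M + N) x = kronApply M x + kronApply N x := by
  refine PiLp.ext fun i => ?_
  show ∑ j, (M i j + N i j) • x j = (∑ j, M i j • x j) + ∑ j, N i j • x j
  rw [← Finset.sum_add_distrib]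
  exact Finset.sum_congr rfl fun j _ => add_smul _ _ _

lemma kronApply_sub_smul {n d : ℕ} (M : Matrix (Fin n) (Fin n) ℝ) (η : ℝ) (u v : Stacked n d) :
    kronApply M (u - η • v) = kronApply M u - η • kronApply M v := by
  refine PiLp.ext fun i => ?_
  show ∑ j, M i j • (u j - η • v j) = (∑ j, M i j • u j) - η • ∑ j, M i j • v j
  rw [Finset.smul_sum, ← Finset.sum_sub_distrib]
  exact Finset.sum_congr rfl fun j _ => by rw [smul_sub, smul_comm]

lemma kronApply_sub {n d : ℕ} (M : Matrix (Fin n) (Fin n) ℝ) (u v : Stacked n d) :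
    kronApply M (u - v) = kronApply M u - kronApply M v := by
  have := kronApply_sub_smul M 1 u v
  rwa [one_smul, one_smul] at this

lemma kronApply_avgMatrix {n d : ℕ} (x : Stacked n d) :
    kronApply ((n : ℝ)⁻¹ • Matrix.of fun _ _ => (1 : ℝ)) x = stack n (blockAvg x) := by
  refine PiLp.ext fun i => ?_
  show ∑ j, ((n : ℝ)⁻¹ • Matrix.of (fun _ _ => (1:ℝ))) i j • x j = (n : ℝ)⁻¹ • ∑ j, x j
  rw [Finset.smul_sum]
  refine Finset.sum_congr rfl fun j _ => ?_
  simp [Matrix.smul_apply]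

lemma kronApply_mix_stack {n d : ℕ} {W : Matrix (Fin n) (Fin n) ℝ} (hW : IsMixing W)
    (y : Vec d) : kronApply W (stack n y) = stack n y := by
  refine PiLp.ext fun i => ?_
  show ∑ j, W i j • y = y
  rw [← Finset.sum_smul]
  have := congrFun hW.1 i
  simp only [Matrix.mulVec, dotProduct, mul_one] at this
  rw [this, one_smul]

lemma sum_kronApply {n d : ℕ} {W : Matrix (Fin n) (Fin n) ℝ} (hW : IsMixing W)
    (x : Stacked n d) : ∑ i, kronApply W x i = ∑ i, x i := by
  show ∑ i, ∑ j, W i j • x j = ∑ i, x i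
  rw [Finset.sum_comm]
  refine Finset.sum_congr rfl fun j _ => ?_
  rw [← Finset.sum_smul]
  have := congrFun hW.2 j
  simp only [Matrix.vecMul, dotProduct, one_mul] at this
  rw [this, one_smul]

lemma blockAvg_stack {n d : ℕ} (hn : n ≠ 0) (y : Vec d) : blockAvg (stack n y) = y := by
  show (n : ℝ)⁻¹ • ∑ _i : Fin n, y = y
  rw [Finset.sum_const, Finset.card_univ, Fintype.card_fin,
    ← Nat.cast_smul_eq_nsmul ℝ, inv_smul_smul₀ (Nat.cast_ne_zero.mpr hn)]

lemma norm_stack_sq {n d : ℕ} (w : Vec d) : ‖stack n w‖ ^ 2 = n * ‖w‖ ^ 2 := by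
  rw [PiLp.norm_sq_eq_of_L2]
  simp [stack, Finset.sum_const, Finset.card_univ]

lemma inner_stack_eq_zero {n d : ℕ} (z : Stacked n d) (w : Vec d)
    (hz : ∑ i, z i = 0) : (inner ℝ z (stack n w) : ℝ) = 0 := by
  rw [PiLp.inner_apply]
  calc (∑ i, (inner ℝ (z i) (stack n w i) : ℝ)) = ∑ i, (inner ℝ (z i) w : ℝ) :=
        Finset.sum_congr rfl fun i _ => rfl
    _ = inner ℝ (∑ i, z i) w := (sum_inner _ _ _).symm
    _ = 0 := by rw [hz, inner_zero_left]

lemma sq_bound_aux (q na nb nx ny al t : ℝ) (hq0 : 0 ≤ q) (hna : 0 ≤ na) (hnb : 0 ≤ nb)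
    (hnx : 0 ≤ nx) (hny : 0 ≤ ny) (hal : 0 ≤ al) (ht : 0 ≤ t)
    (h1 : na ≤ 2 * nx) (h2 : nb ≤ al * ny) (h3 : q ≤ na + t * nb) :
    q ^ 2 ≤ 8 * nx ^ 2 + 2 * al ^ 2 * t ^ 2 * ny ^ 2 := by
  have h4 : q ≤ 2 * nx + t * (al * ny) := by
    have := mul_le_mul_of_nonneg_left h2 ht
    linarith
  have h5 : q * q ≤ (2 * nx + t * (al * ny)) * (2 * nx + t * (al * ny)) :=
    mul_self_le_mul_self hq0 h4
  nlinarith [sq_nonneg (2 * nx - t * (al * ny))]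

/-- For a mixing matrix `W` with mixing rate `α ≤ 1`,
`‖(W ⊗ I_d)(u − ηv) − u‖² ≤ 8‖u − 1ₙ⊗ū‖² + 2α²η²‖v − 1ₙ⊗v̄‖² + η²n‖v̄‖²`. -/
theorem inner_step_difference_bound {n d : ℕ} (W : Matrix (Fin n) (Fin n) ℝ) (α : ℝ)
    (hW : IsMixing W) (hα : α = mixingRate W) (hα1 : α ≤ 1)
    (η : ℝ) (u v : Stacked n d) :
    ‖kronApply W (u - η • v) - u‖ ^ 2 ≤
      8 * ‖u - stack n (blockAvg u)‖ ^ 2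
      + 2 * α ^ 2 * η ^ 2 * ‖v - stack n (blockAvg v)‖ ^ 2
      + η ^ 2 * n * ‖blockAvg v‖ ^ 2 := by
  rcases Nat.eq_zero_or_pos n with hn | hn
  · subst hn
    have hz : ∀ z : Stacked 0 d, z = 0 := fun z => PiLp.ext fun i => i.elim0
    rw [hz (kronApply W (u - η • v) - u), hz (u - stack 0 (blockAvg u)),
      hz (v - stack 0 (blockAvg v))]
    simp
  have hn0 : n ≠ 0 := hn.ne'
  have hnn : (n : ℝ) ≠ 0 := Nat.cast_ne_zero.mpr hn0
  set P : Matrix (Fin n) (Fin n) ℝ := (n : ℝ)⁻¹ • Matrix.of fun _ _ => (1:ℝ) with hP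
  set A : Matrix (Fin n) (Fin n) ℝ := W - P with hA
  have hWA : W = A + P := by rw [hA, sub_add_cancel]
  set x := u - stack n (blockAvg u) with hx
  set y := v - stack n (blockAvg v) with hy
  -- sum over blocks of centered vectors vanishes
  have hsum : ∀ z : Stacked n d, ∑ i, (z - stack n (blockAvg z)) i = 0 := by
    intro z
    have h1 : ∑ i, (z - stack n (blockAvg z)) i
        = (∑ i, z i) - ∑ _i : Fin n, blockAvg z := by
      rw [← Finset.sum_sub_distrib]
      exact Finset.sum_congr rfl fun i _ => rfl
    rw [h1, Finset.sum_const, Finset.card_univ, Fintype.card_fin, blockAvg,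
      ← Nat.cast_smul_eq_nsmul ℝ, smul_inv_smul₀ hnn, sub_self]
  -- W splits into A plus averaging
  have hWsplit : ∀ z : Stacked n d, kronApply W z = kronApply A z + stack n (blockAvg z) := by
    intro z
    rw [hWA, kronApply_matrix_add, hP, kronApply_avgMatrix]
  have hAstack : ∀ w : Vec d, kronApply A (stack n w) = 0 := by
    intro w
    have h := hWsplit (stack n w)
    rw [kronApply_mix_stack hW, blockAvg_stack hn0 w] at h
    exact right_eq_add.mp h
  have hAsum : ∀ z : Stacked n d, ∑ i, kronApply A z i = 0 := by
    intro z
    have h := hWsplit z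
    have h2 : ∑ i, kronApply W z i = ∑ i, (kronApply A z + stack n (blockAvg z)) i := by
      rw [h]
    rw [sum_kronApply hW] at h2
    have h3 : ∑ i, (kronApply A z + stack n (blockAvg z)) i
        = (∑ i, kronApply A z i) + ∑ _i : Fin n, blockAvg z := by
      rw [← Finset.sum_add_distrib]
      exact Finset.sum_congr rfl fun i _ => rfl
    rw [h3, Finset.sum_const, Finset.card_univ, Fintype.card_fin, blockAvg,
      ← Nat.cast_smul_eq_nsmul ℝ, smul_inv_smul₀ hnn] at h2
    exact right_eq_add.mp h2
  -- A annihilates the stack components of u and v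
  have hKAu : kronApply A u = kronApply A x := by
    rw [hx, kronApply_sub, hAstack, sub_zero]
  have hKAv : kronApply A v = kronApply A y := by
    rw [hy, kronApply_sub, hAstack, sub_zero]
  set a : Stacked n d := kronApply A x - x with ha
  set b : Stacked n d := kronApply A y with hb
  set c : Stacked n d := stack n (blockAvg v) with hc
  have h1 : kronApply W u - u = a := by
    rw [hWsplit u, hKAu, ha, hx]
    abel
  have hdecomp : kronApply W (u - η • v) - u = (a + (-η) • b) + (-η) • c := by
    rw [kronApply_sub_smul, hWsplit v, hKAv, ← hc, ← h1]
    simp only [smul_add, neg_smul]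
    abel
  -- block sums vanish for a and b
  have hsx : ∑ i, x i = 0 := hsum u
  have hsa : ∑ i, a i = 0 := by
    have h4 : ∑ i, a i = (∑ i, kronApply A x i) - ∑ i, x i := by
      rw [ha, ← Finset.sum_sub_distrib]
      exact Finset.sum_congr rfl fun i _ => rfl
    rw [h4, hAsum, hsx, sub_zero]
  have hsb : ∑ i, b i = 0 := hAsum y
  have hsum_p : ∑ i, (a + (-η) • b) i = 0 := by
    have h5 : ∑ i, (a + (-η) • b) i = (∑ i, a i) + (-η) • ∑ i, b i := by
      rw [Finset.smul_sum, ← Finset.sum_add_distrib]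
      exact Finset.sum_congr rfl fun i _ => rfl
    rw [h5, hsa, hsb, smul_zero, add_zero]
  have hinner : (inner ℝ (a + (-η) • b) ((-η) • c) : ℝ) = 0 := by
    rw [real_inner_smul_right,
      inner_stack_eq_zero (a + (-η) • b) (blockAvg v) hsum_p, mul_zero]
  have hsplit : ‖kronApply W (u - η • v) - u‖ ^ 2
      = ‖a + (-η) • b‖ ^ 2 + ‖(-η) • c‖ ^ 2 := by
    rw [hdecomp, @norm_add_sq_real, hinner]
    ring
  -- norm bounds
  have hα0 : 0 ≤ α := hα ▸ norm_nonneg _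
  have hαx : ‖kronApply A x‖ ≤ α * ‖x‖ := by
    rw [hα]; exact kronApply_norm_le A x
  have hαy : ‖b‖ ≤ α * ‖y‖ := by
    rw [hα]; exact kronApply_norm_le A y
  have ha_norm : ‖a‖ ≤ 2 * ‖x‖ := by
    calc ‖a‖ ≤ ‖kronApply A x‖ + ‖x‖ := norm_sub_le _ _
      _ ≤ α * ‖x‖ + ‖x‖ := by linarith
      _ ≤ 2 * ‖x‖ := by nlinarith [norm_nonneg x]
  have hb_norm : ‖(-η) • b‖ = |η| * ‖b‖ := by
    rw [norm_smul, Real.norm_eq_abs, abs_neg]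
  have hc2 : ‖(-η) • c‖ ^ 2 = η ^ 2 * ↑n * ‖blockAvg v‖ ^ 2 := by
    rw [norm_smul, mul_pow, norm_stack_sq, Real.norm_eq_abs, abs_neg, sq_abs]; ring
  have hp : ‖a + (-η) • b‖ ≤ ‖a‖ + ‖(-η) • b‖ := norm_add_le _ _
  rw [hsplit, hc2]
  have hq : ‖a + (-η) • b‖ ^ 2 ≤ 8 * ‖x‖ ^ 2 + 2 * α ^ 2 * |η| ^ 2 * ‖y‖ ^ 2 :=
    sq_bound_aux _ _ _ _ _ _ _ (norm_nonneg _) (norm_nonneg a) (norm_nonneg b)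
      (norm_nonneg x) (norm_nonneg y) hα0 (abs_nonneg η) ha_norm hαy
      (by rw [← hb_norm]; exact hp)
  rw [sq_abs] at hq
  linarith
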